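/- Let 0 < q < 1 and let x be a real number with |x| < 1. Then ∏_{s=0}^∞ (1 - q^s x)^{-1} = Σ_{k=0}^∞ x^k / ((1-q)(1-q^2)⋯(1-q^k)); that is, the limit as n → ∞ of 1/(1-x)_q^n equals the q-exponential series e_q(x). -/

import Mathlib

open Finset Filter Topology

/-- Limit of `1/(1-x)_q^n = (∏_{s=0}^{n-1}(1 - q^s x))⁻¹` as `n → ∞` is the
q-exponential series `e_q(x) = Σ_{k=0}^∞ x^k / ((1-q)(1-q^2)⋯(1-q^k))`. -/
theorem tendsto_inv_qPoch_eq_qExp (q : ℝ) (hq0 : 0 < q) (hq1 : q < 1)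
    (x : ℝ) (hx : |x| < 1) :
    Tendsto (fun n : ℕ => (∏ s ∈ Finset.range n, (1 - q ^ s * x))⁻¹) atTop
      (𝓝 (∑' k : ℕ, x ^ k / ∏ i ∈ Finset.range k, (1 - q ^ (i + 1)))) := by
  have hq1' : (0:ℝ) < 1 - q := by linarith
  set C : ℝ := Real.exp (-(q / ((1 - q) * (1 - q)))) with hCdef
  have hCpos : 0 < C := Real.exp_pos _
  set D : ℕ → ℝ := fun k => ∏ i ∈ Finset.range k, (1 - q ^ (i + 1)) with hDdef
  have hqpow : ∀ i : ℕ, q ^ (i+1) ≤ q := by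
    intro i
    calc q ^ (i+1) ≤ q ^ 1 := pow_le_pow_of_le_one hq0.le hq1.le (by omega)
    _ = q := pow_one q
  have hqpow0 : ∀ i : ℕ, 0 < q ^ i := fun i => pow_pos hq0 i
  -- lower bound on each factor
  have hfac : ∀ i : ℕ, Real.exp (-(q ^ (i+1) / (1 - q))) ≤ 1 - q ^ (i+1) := by
    intro i
    set t := q ^ (i+1) with htdef
    have ht0 : 0 < t := pow_pos hq0 _
    have ht1 : t ≤ q := hqpow i
    have htl : 0 < 1 - t := by linarith
    have hE := Real.add_one_le_exp (t / (1 - t))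
    have hEpos : 0 < Real.exp (t / (1 - t)) := Real.exp_pos _
    have h1 : 1 ≤ (1 - t) * Real.exp (t / (1 - t)) := by
      have heq : (1 - t) * (t / (1 - t) + 1) = 1 := by field_simp; ring
      nlinarith
    have h2 : Real.exp (-(t / (1 - t))) ≤ 1 - t := by
      rw [Real.exp_neg, inv_eq_one_div, div_le_iff₀ hEpos]
      linarith
    refine le_trans ?_ h2
    apply Real.exp_le_exp.mpr
    have : t / (1 - t) ≤ t / (1 - q) := by gcongr
    linarith
  -- lower bound on the partial products
  have hDC : ∀ k, C ≤ D k := by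
    intro k
    have h2 : ∏ i ∈ Finset.range k, Real.exp (-(q^(i+1)/(1-q))) ≤ D k :=
      Finset.prod_le_prod (fun i _ => (Real.exp_pos _).le) (fun i _ => hfac i)
    refine le_trans ?_ h2
    rw [← Real.exp_sum]
    apply Real.exp_le_exp.mpr
    have hsum : ∑ i ∈ Finset.range k, q^(i+1) ≤ q / (1-q) := by
      have h3 : ∑ i ∈ Finset.range k, q^(i+1) = q * ∑ i ∈ Finset.range k, q^i := by
        rw [Finset.mul_sum]; exact Finset.sum_congr rfl fun i _ => by ring
      have h4 : ∑ i ∈ Finset.range k, q^i ≤ (1-q)⁻¹ := by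
        have h5 := Summable.sum_le_tsum (Finset.range k) (fun i _ => (pow_pos hq0 i).le)
          (summable_geometric_of_lt_one hq0.le hq1)
        rwa [tsum_geometric_of_lt_one hq0.le hq1] at h5
      rw [h3, div_eq_mul_inv]
      nlinarith
    have h6 : ∑ i ∈ Finset.range k, -(q^(i+1)/(1-q))
        = -((∑ i ∈ Finset.range k, q^(i+1))/(1-q)) := by
      simp only [neg_div, Finset.sum_neg_distrib, Finset.sum_div]
    rw [h6]
    have h7 : (∑ i ∈ Finset.range k, q^(i+1))/(1-q) ≤ (q/(1-q))/(1-q) := by gcongr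
    have h8 : (q/(1-q))/(1-q) = q / ((1-q)*(1-q)) := div_div q (1-q) (1-q)
    linarith [h7, h8.le]
  have hDpos : ∀ k, 0 < D k := fun k => lt_of_lt_of_le hCpos (hDC k)
  -- summability
  have hsummable : ∀ y : ℝ, |y| < 1 → Summable (fun k => y ^ k / D k) := by
    intro y hy
    apply Summable.of_norm_bounded
      (((summable_geometric_of_lt_one (abs_nonneg y) hy)).div_const C)
    intro k
    rw [Real.norm_eq_abs, abs_div, abs_pow, abs_of_pos (hDpos k)]
    gcongr
    exact hDC k
  -- functional equation
  have hkey : ∀ y : ℝ, |y| < 1 →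
      (1 - y) * (∑' k, y ^ k / D k) = ∑' k, (q * y) ^ k / D k := by
    intro y hy
    have hqy : |q * y| < 1 := by
      rw [abs_mul, abs_of_pos hq0]
      nlinarith [abs_nonneg y]
    have hS := hsummable y hy
    have hSq := hsummable (q*y) hqy
    have e1 : ∑' k, (y^k/D k - (q*y)^k/D k)
        = (∑' k, y^k/D k) - ∑' k, (q*y)^k/D k := Summable.tsum_sub hS hSq
    have e2 : ∑' k, (y^k/D k - (q*y)^k/D k) = y * ∑' k, y^k/D k := by
      rw [Summable.tsum_eq_zero_add (hS.sub hSq)]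
      have hterm : ∀ k : ℕ,
          y^(k+1)/D (k+1) - (q*y)^(k+1)/D (k+1) = y * (y^k / D k) := by
        intro k
        have hD1 : D (k+1) = D k * (1 - q^(k+1)) := Finset.prod_range_succ _ _
        have hne : (1 - q^(k+1)) ≠ 0 := by
          have := hqpow k; have := hqpow0 (k+1); intro h; nlinarith
        have hDkne : D k ≠ 0 := (hDpos k).ne'
        rw [hD1, mul_pow]
        field_simp
        ring
      rw [tsum_congr hterm, tsum_mul_left]
      simp
    linear_combination e2 - e1
  have hqnx : ∀ n : ℕ, |q ^ n * x| < 1 := by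
    intro n
    rw [abs_mul, abs_of_pos (hqpow0 n)]
    have h1 : q ^ n ≤ 1 := pow_le_one₀ hq0.le hq1.le
    nlinarith [abs_nonneg x]
  have hM : Summable (fun k : ℕ => |x| ^ k / C) :=
    (summable_geometric_of_lt_one (abs_nonneg x) hx).div_const C
  set M : ℝ := ∑' k : ℕ, |x| ^ k / C with hMdef
  have hM0 : 0 ≤ M := tsum_nonneg (fun k => by positivity)
  -- f (q^n x) → 1
  have hone : Tendsto (fun n : ℕ => ∑' k, (q ^ n * x) ^ k / D k) atTop (𝓝 1) := by
    have hbound : ∀ n : ℕ, ‖(∑' k, (q ^ n * x) ^ k / D k) - 1‖ ≤ q ^ n * (|x| * M) := by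
      intro n
      set y := q ^ n * x with hydef
      have hy : |y| < 1 := hqnx n
      have hyx : |y| = q ^ n * |x| := by rw [hydef, abs_mul, abs_of_pos (hqpow0 n)]
      have hyx' : |y| ≤ |x| := by
        rw [hyx]; nlinarith [abs_nonneg x, pow_le_one₀ hq0.le hq1.le (n := n)]
      have hsplit : (∑' k, y ^ k / D k) = 1 + ∑' k, y ^ (k+1) / D (k+1) := by
        rw [Summable.tsum_eq_zero_add (hsummable y hy)]
        simp [hDdef]
      rw [hsplit, add_sub_cancel_left]
      have h1 : ‖∑' k : ℕ, y ^ (k+1) / D (k+1)‖ ≤ |y| * M := by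
        apply tsum_of_norm_bounded (hM.hasSum.mul_left |y|)
        intro k
        calc ‖y ^ (k+1) / D (k+1)‖ = |y| ^ (k+1) / D (k+1) := by
              rw [Real.norm_eq_abs, abs_div, abs_pow, abs_of_pos (hDpos (k+1))]
          _ ≤ (|y| * |x| ^ k) / C := by
              have h2 : |y| ^ (k+1) ≤ |y| * |x| ^ k := by
                rw [pow_succ']
                gcongr
              gcongr
              exact hDC (k+1)
          _ = |y| * (|x| ^ k / C) := mul_div_assoc _ _ _
      calc ‖∑' k : ℕ, y ^ (k+1) / D (k+1)‖ ≤ |y| * M := h1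
        _ = q ^ n * |x| * M := by rw [hyx]
        _ = q ^ n * (|x| * M) := mul_assoc _ _ _
    have hzero : Tendsto (fun n : ℕ => (∑' k, (q ^ n * x) ^ k / D k) - 1) atTop (𝓝 0) := by
      apply squeeze_zero_norm hbound
      have h3 := (tendsto_pow_atTop_nhds_zero_of_lt_one hq0.le hq1).mul_const (|x| * M)
      simpa using h3
    have h4 := hzero.add (tendsto_const_nhds (x := (1:ℝ)) (f := atTop))
    simpa using h4
  -- iterate the functional equation
  have hiter : ∀ n : ℕ, (∏ s ∈ Finset.range n, (1 - q ^ s * x)) * (∑' k, x ^ k / D k)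
      = ∑' k, (q ^ n * x) ^ k / D k := by
    intro n
    induction n with
    | zero => simp
    | succ n ih =>
      rw [Finset.prod_range_succ]
      calc (∏ s ∈ Finset.range n, (1 - q ^ s * x)) * (1 - q ^ n * x) * (∑' k, x ^ k / D k)
          = (1 - q ^ n * x) * ((∏ s ∈ Finset.range n, (1 - q ^ s * x)) * ∑' k, x ^ k / D k) := by
            ring
        _ = (1 - q ^ n * x) * ∑' k, (q ^ n * x) ^ k / D k := by rw [ih]
        _ = ∑' k, (q * (q ^ n * x)) ^ k / D k := hkey (q ^ n * x) (hqnx n)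
        _ = ∑' k, (q ^ (n+1) * x) ^ k / D k :=
            tsum_congr fun k => by rw [show q * (q ^ n * x) = q ^ (n+1) * x by ring]
  have hprodpos : ∀ n : ℕ, 0 < ∏ s ∈ Finset.range n, (1 - q ^ s * x) := by
    intro n
    apply Finset.prod_pos
    intro s _
    have h := abs_lt.mp (hqnx s)
    linarith [h.2]
  have hNe : ∀ᶠ n : ℕ in atTop, (∑' k, (q ^ n * x) ^ k / D k) ≠ 0 :=
    hone.eventually_ne one_ne_zero
  have hlim : Tendsto (fun n : ℕ => (∑' k, x ^ k / D k) / (∑' k, (q ^ n * x) ^ k / D k))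
      atTop (𝓝 (∑' k, x ^ k / D k)) := by
    have h5 := Tendsto.div (tendsto_const_nhds (x := ∑' k, x ^ k / D k) (f := atTop)) hone
      one_ne_zero
    rw [div_one] at h5; exact h5
  apply hlim.congr'
  filter_upwards [hNe] with n hn
  have hp := hprodpos n
  have hfx : (∑' k, x ^ k / D k) ≠ 0 := by
    intro h; apply hn; rw [← hiter n, h, mul_zero]
  rw [← hiter n]
  field_simp
  simp_rw [mul_comm x]
  exact (div_self hp.ne').symm
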